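/- For four points on the unit circle at angles 0 ≤ θ₁ < θ₂ < θ₃ < θ₄ < 2π, with r_{jk} = 2 sin((θ_k − θ_j)/2) for j < k, and any α > 0: 1/r₁₃^α + 1/r₂₄^α < 1/r₁₄^α + 1/r₂₃^α. -/
import Mathlib

open Real

/-- Convexity inequality for `t ↦ 1/t^α` at a concrete convex combination,
proved via two applications of weighted AM-GM. -/
lemma inv_rpow_convex_aux {α u v l : ℝ} (hα : 0 < α) (hu : 0 < u) (hv : 0 < v)
    (hl0 : 0 ≤ l) (hl1 : l ≤ 1) :
    1 / (l * u + (1 - l) * v) ^ α ≤ l * (1 / u ^ α) + (1 - l) * (1 / v ^ α) := by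
  have hl1' : 0 ≤ 1 - l := by linarith
  have hm : 0 < l * u + (1 - l) * v := by
    rcases lt_or_eq_of_le hl0 with h | h
    · exact add_pos_of_pos_of_nonneg (mul_pos h hu) (mul_nonneg hl1' hv.le)
    · rw [← h]; simpa using hv
  -- geometric mean ≤ arithmetic mean
  have h1 : u ^ l * v ^ (1 - l) ≤ l * u + (1 - l) * v :=
    Real.geom_mean_le_arith_mean2_weighted hl0 hl1' hu.le hv.le (by ring)
  have hg : 0 < u ^ l * v ^ (1 - l) :=
    mul_pos (Real.rpow_pos_of_pos hu _) (Real.rpow_pos_of_pos hv _)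
  have h2 : (u ^ l * v ^ (1 - l)) ^ α ≤ (l * u + (1 - l) * v) ^ α :=
    Real.rpow_le_rpow hg.le h1 hα.le
  have h2' : 1 / (l * u + (1 - l) * v) ^ α ≤ 1 / (u ^ l * v ^ (1 - l)) ^ α := by
    apply one_div_le_one_div_of_le (Real.rpow_pos_of_pos hg _) h2
  refine h2'.trans ?_
  have hrw : 1 / (u ^ l * v ^ (1 - l)) ^ α
      = (1 / u ^ α) ^ l * (1 / v ^ α) ^ (1 - l) := by
    rw [Real.mul_rpow (Real.rpow_nonneg hu.le _) (Real.rpow_nonneg hv.le _),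
      one_div, one_div, one_div,
      Real.inv_rpow (Real.rpow_nonneg hu.le _), Real.inv_rpow (Real.rpow_nonneg hv.le _),
      ← Real.rpow_mul hu.le, ← Real.rpow_mul hv.le,
      ← Real.rpow_mul hu.le, ← Real.rpow_mul hv.le, ← mul_inv,
      mul_comm α l, mul_comm α (1 - l)]
  rw [hrw]
  exact Real.geom_mean_le_arith_mean2_weighted hl0 hl1'
    (one_div_nonneg.2 (Real.rpow_nonneg hu.le _))
    (one_div_nonneg.2 (Real.rpow_nonneg hv.le _)) (by ring)

/-- For `a < p < b`, `a < q < b` in `(0, π)` with `p + q = a + b`: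
`1/(2 sin p)^α + 1/(2 sin q)^α < 1/(2 sin b)^α + 1/(2 sin a)^α`. -/
lemma key_aux {α a b p q : ℝ} (hα : 0 < α) (ha : 0 < a) (hb : Real.pi > b)
    (hap : a < p) (hpb : p < b) (haq : a < q) (hqb : q < b) (hsum : p + q = a + b) :
    1 / (2 * Real.sin p) ^ α + 1 / (2 * Real.sin q) ^ α
      < 1 / (2 * Real.sin b) ^ α + 1 / (2 * Real.sin a) ^ α := by
  set l : ℝ := (b - p) / (b - a) with hl
  have hba : 0 < b - a := by linarith
  have hl0 : 0 < l := div_pos (by linarith) hba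
  have hl1 : l < 1 := (div_lt_one hba).2 (by linarith)
  have hpl : p = l * a + (1 - l) * b := by
    rw [hl]; field_simp; ring
  have hql : q = (1 - l) * a + l * b := by
    have : q = a + b - p := by linarith
    rw [this, hpl]; ring
  have hmemA : a ∈ Set.Icc 0 Real.pi := ⟨ha.le, by linarith⟩
  have hmemB : b ∈ Set.Icc 0 Real.pi := ⟨by linarith, hb.le⟩
  have hne : a ≠ b := by linarith
  have hsinA : 0 < Real.sin a := Real.sin_pos_of_pos_of_lt_pi ha (by linarith)
  have hsinB : 0 < Real.sin b := Real.sin_pos_of_pos_of_lt_pi (by linarith) hb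
  -- strict concavity of sin
  have hconc1 : l * Real.sin a + (1 - l) * Real.sin b < Real.sin p := by
    have := strictConcaveOn_sin_Icc.2 hmemA hmemB hne hl0
      (show (0:ℝ) < 1 - l by linarith) (show l + (1 - l) = 1 by ring)
    simpa [smul_eq_mul, ← hpl] using this
  have hconc2 : (1 - l) * Real.sin a + l * Real.sin b < Real.sin q := by
    have := strictConcaveOn_sin_Icc.2 hmemA hmemB hne (show (0:ℝ) < 1 - l by linarith) hl0
      (show (1 - l) + l = 1 by ring)
    simpa [smul_eq_mul, ← hql] using this
  have hcomb1 : 0 < l * (2 * Real.sin a) + (1 - l) * (2 * Real.sin b) := by nlinarith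
  have hcomb2 : 0 < (1 - l) * (2 * Real.sin a) + l * (2 * Real.sin b) := by nlinarith
  -- first term: strict
  have hstep1 : 1 / (2 * Real.sin p) ^ α
      < l * (1 / (2 * Real.sin a) ^ α) + (1 - l) * (1 / (2 * Real.sin b) ^ α) := by
    have hlt : l * (2 * Real.sin a) + (1 - l) * (2 * Real.sin b) < 2 * Real.sin p := by
      nlinarith
    have h1 : 1 / (2 * Real.sin p) ^ α
        < 1 / (l * (2 * Real.sin a) + (1 - l) * (2 * Real.sin b)) ^ α := by
      apply one_div_lt_one_div_of_lt (Real.rpow_pos_of_pos hcomb1 _)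
      exact Real.rpow_lt_rpow hcomb1.le hlt hα
    exact h1.trans_le (inv_rpow_convex_aux hα (by linarith) (by linarith) hl0.le hl1.le)
  have hstep2 : 1 / (2 * Real.sin q) ^ α
      ≤ (1 - l) * (1 / (2 * Real.sin a) ^ α) + l * (1 / (2 * Real.sin b) ^ α) := by
    have hlt : (1 - l) * (2 * Real.sin a) + l * (2 * Real.sin b) < 2 * Real.sin q := by
      nlinarith
    have h1 : 1 / (2 * Real.sin q) ^ α
        ≤ 1 / ((1 - l) * (2 * Real.sin a) + l * (2 * Real.sin b)) ^ α := by
      apply one_div_le_one_div_of_le (Real.rpow_pos_of_pos hcomb2 _)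
      exact Real.rpow_le_rpow hcomb2.le hlt.le hα.le
    have h2 := inv_rpow_convex_aux hα (show (0:ℝ) < 2 * Real.sin a by linarith)
      (show (0:ℝ) < 2 * Real.sin b by linarith) (by linarith : (0:ℝ) ≤ 1 - l)
      (by linarith : (1:ℝ) - l ≤ 1)
    have : 1 - (1 - l) = l := by ring
    rw [this] at h2
    exact h1.trans h2
  linarith [hstep1, hstep2]

/-- For four points on the unit circle at angles `0 ≤ θ₁ < θ₂ < θ₃ < θ₄ < 2π`,
with `r_{jk} = 2 sin((θ_k − θ_j)/2)`, and any `α > 0`: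
`1/r₁₃^α + 1/r₂₄^α < 1/r₁₄^α + 1/r₂₃^α`. -/
theorem stmt_5 (α θ₁ θ₂ θ₃ θ₄ : ℝ) (hα : 0 < α)
    (h0 : 0 ≤ θ₁) (h12 : θ₁ < θ₂) (h23 : θ₂ < θ₃) (h34 : θ₃ < θ₄) (h4 : θ₄ < 2 * Real.pi)
    (r : ℝ → ℝ → ℝ) (hr : ∀ x y, r x y = 2 * Real.sin ((y - x) / 2)) :
    1 / r θ₁ θ₃ ^ α + 1 / r θ₂ θ₄ ^ α < 1 / r θ₁ θ₄ ^ α + 1 / r θ₂ θ₃ ^ α := by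
  rw [hr, hr, hr, hr]
  exact key_aux hα (by linarith : (0:ℝ) < (θ₃ - θ₂)/2)
    (by linarith : (θ₄ - θ₁)/2 < Real.pi)
    (by linarith : (θ₃ - θ₂)/2 < (θ₃ - θ₁)/2)
    (by linarith : (θ₃ - θ₁)/2 < (θ₄ - θ₁)/2)
    (by linarith : (θ₃ - θ₂)/2 < (θ₄ - θ₂)/2)
    (by linarith : (θ₄ - θ₂)/2 < (θ₄ - θ₁)/2)
    (by ring)
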